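/- Let g be a nonempty list of positive natural numbers, M the additive submonoid of ℕ generated by g, and mgen_g n = sum over i in lgen_{|g|−1} n of g[i]. Then for every k ∈ ℕ and every x ∈ M with x < (length of lgen_{|g|−1} k) · (minimum of g), there exists n < k with mgen_g n = x. -/

import Mathlib

def next (m : ℕ) : List ℕ → List ℕ
  | [] => [0]
  | h :: t =>
    if h < m then (h + 1) :: t
    else
      match next m t with
      | [] => []
      | x :: t' => x :: x :: t'

def lgen (m : ℕ) : ℕ → List ℕ
  | 0 => []
  | n + 1 => next m (lgen m n)

def mgen (g : List ℕ) (n : ℕ) : ℕ :=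
  ((lgen (g.length - 1) n).map (fun i => g.getD i 0)).sum

lemma next_ne_nil (m : ℕ) (l : List ℕ) : next m l ≠ [] := by
  induction l with
  | nil => simp [next]
  | cons h t ih =>
    simp only [next]
    split
    · simp
    · cases hnt : next m t with
      | nil => exact absurd hnt ih
      | cons x t' => simp

lemma length_le_next (m : ℕ) (l : List ℕ) : l.length ≤ (next m l).length := by
  induction l with
  | nil => simp [next]
  | cons h t ih =>
    simp only [next]
    split
    · simp
    · cases hnt : next m t with
      | nil => exact absurd hnt (next_ne_nil m t)
      | cons x t' =>
        rw [hnt] at ih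
        simpa using Nat.succ_le_succ ih

lemma next_le (m : ℕ) (l : List ℕ) (h : ∀ a ∈ l, a ≤ m) : ∀ a ∈ next m l, a ≤ m := by
  induction l with
  | nil => simp [next]
  | cons hd t ih =>
    simp only [next]
    split
    · intro a ha
      rcases List.mem_cons.1 ha with rfl | ha
      · omega
      · exact h a (List.mem_cons_of_mem _ ha)
    · cases hnt : next m t with
      | nil => simp
      | cons x t' =>
        intro a ha
        have hx : ∀ b ∈ next m t, b ≤ m := ih (fun b hb => h b (List.mem_cons_of_mem _ hb))
        rw [hnt] at hx
        rcases List.mem_cons.1 ha with rfl | ha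
        · exact hx a (by simp)
        · rcases List.mem_cons.1 ha with rfl | ha
          · exact hx a (by simp)
          · exact hx a (by simp [ha])
def prev (m : ℕ) : List ℕ → List ℕ
  | [] => []
  | [a] => if a = 0 then [] else [a - 1]
  | a :: b :: t => if b < a then (a - 1) :: b :: t else m :: prev m (a :: t)
termination_by l => l.length

def valL (m : ℕ) : List ℕ → ℕ
  | [] => 0
  | a :: t => a + (m + 1) * valL m t

lemma valL_lt (m : ℕ) : ∀ l : List ℕ, (∀ a ∈ l, a ≤ m) → valL m l < (m + 1) ^ l.length := by
  intro l
  induction l with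
  | nil => simp [valL]
  | cons a t ih =>
    intro h
    have h1 := ih (fun b hb => h b (List.mem_cons_of_mem _ hb))
    have h2 : a ≤ m := h a (by simp)
    simp only [valL, List.length_cons, pow_succ]
    calc a + (m+1) * valL m t ≤ m + (m+1) * valL m t := by omega
    _ < (m+1) * (valL m t + 1) := by ring_nf; omega
    _ ≤ (m+1) * (m+1)^t.length := by
        exact Nat.mul_le_mul_left _ (by omega)
    _ = (m+1)^t.length * (m+1) := by ring

lemma prev_props (m : ℕ) : ∀ l : List ℕ, l.Pairwise (· ≥ ·) → (∀ a ∈ l, a ≤ m) → l ≠ [] →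
    (prev m l).Pairwise (· ≥ ·) ∧ (∀ a ∈ prev m l, a ≤ m) ∧
    (prev m l).length ≤ l.length ∧
    ((prev m l).length = l.length → valL m (prev m l) < valL m l) := by
  intro l
  induction l with
  | nil => intro _ _ h; exact absurd rfl h
  | cons a t ih =>
    intro hs hle _
    have ham : a ≤ m := hle a (by simp)
    cases t with
    | nil =>
      by_cases ha : a = 0
      · subst ha; simp [prev]
      · refine ⟨by simp [prev, ha], ?_, by simp [prev, ha], ?_⟩
        · intro b hb; simp [prev, ha] at hb; omega
        · intro _; simp [prev, ha, valL]; omega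
    | cons b t' =>
      have hba : b ≤ a := (List.pairwise_cons.1 hs).1 b (by simp)
      by_cases h : b < a
      · refine ⟨?_, ?_, by simp [prev, h], ?_⟩
        · simp only [prev, if_pos h]
          rw [List.pairwise_cons] at hs ⊢
          refine ⟨fun c hc => ?_, hs.2⟩
          have := hs.1 c hc
          rcases List.mem_cons.1 hc with rfl | hc'
          · omega
          · have := (List.pairwise_cons.1 hs.2).1 c hc'; omega
        · intro c hc
          simp only [prev, if_pos h] at hc
          rcases List.mem_cons.1 hc with rfl | hc'
          · omega
          · exact hle c (List.mem_cons_of_mem _ hc')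
        · intro _
          simp only [prev, if_pos h, valL]
          omega
      · have hab : b = a := by omega
        subst hab
        have hs' : (b :: t').Pairwise (· ≥ ·) := by
          rw [List.pairwise_cons] at hs ⊢
          exact ⟨fun c hc => (List.pairwise_cons.1 hs.2).1 c hc, (List.pairwise_cons.1 hs.2).2⟩
        have hle' : ∀ c ∈ b :: t', c ≤ m := fun c hc => hle c (List.mem_cons_of_mem _ hc)
        obtain ⟨ps, ple, plen, pval⟩ := ih hs' hle' (by simp)
        refine ⟨?_, ?_, ?_, ?_⟩
        · simp only [prev, if_neg h]
          rw [List.pairwise_cons]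
          exact ⟨fun c hc => ple c hc, ps⟩
        · intro c hc
          simp only [prev, if_neg h] at hc
          rcases List.mem_cons.1 hc with rfl | hc'
          · exact le_rfl
          · exact ple c hc'
        · simp only [prev, if_neg h, List.length_cons]
          simpa using plen
        · intro hl
          simp only [prev, if_neg h, List.length_cons] at hl
          have hl' : (prev m (b :: t')).length = (b :: t').length := by
            simp at hl ⊢; omega
          have hv := pval hl'
          simp only [prev, if_neg h]
          show m + (m+1) * valL m (prev m (b :: t')) < b + (m+1) * valL m (b :: t')
          have hmul : (m+1) * (valL m (prev m (b :: t')) + 1) ≤ (m+1) * valL m (b :: t') :=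
            Nat.mul_le_mul_left _ hv
          rw [Nat.mul_add, Nat.mul_one] at hmul
          omega

lemma next_prev (m : ℕ) : ∀ l : List ℕ, l.Pairwise (· ≥ ·) → (∀ a ∈ l, a ≤ m) → l ≠ [] →
    next m (prev m l) = l := by
  intro l
  induction l with
  | nil => intro _ _ h; exact absurd rfl h
  | cons a t ih =>
    intro hs hle _
    cases t with
    | nil =>
      by_cases ha : a = 0
      · subst ha; simp [prev, next]
      · have ham : a ≤ m := hle a (by simp)
        simp only [prev, if_neg ha, next, if_pos (by omega : a - 1 < m)]
        congr 1; omega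
    | cons b t' =>
      have hba : b ≤ a := (List.pairwise_cons.1 hs).1 b (by simp)
      by_cases h : b < a
      · have ham : a ≤ m := hle a (by simp)
        simp only [prev, if_pos h, next, if_pos (by omega : a - 1 < m)]
        congr 1; omega
      · have hab : b = a := by omega
        subst hab
        have hs' : (b :: t').Pairwise (· ≥ ·) := by
          rw [List.pairwise_cons] at hs ⊢
          exact ⟨fun c hc => (List.pairwise_cons.1 hs.2).1 c hc, (List.pairwise_cons.1 hs.2).2⟩
        have hle' : ∀ c ∈ b :: t', c ≤ m := fun c hc => hle c (List.mem_cons_of_mem _ hc)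
        have key := ih hs' hle' (by simp)
        simp only [prev, if_neg h, next, if_neg (by omega : ¬ m < m)]
        rw [key]

noncomputable def csum (m n : ℕ) : ℕ := ∑ j ∈ Finset.range n, (m + 1) ^ j

lemma csum_mono (m : ℕ) {a b : ℕ} (h : a ≤ b) : csum m a ≤ csum m b :=
  Finset.sum_le_sum_of_subset (Finset.range_subset_range.2 h)

lemma reach (m : ℕ) : ∀ l : List ℕ, l.Pairwise (· ≥ ·) → (∀ a ∈ l, a ≤ m) →
    ∃ n, lgen m n = l := by
  have H : ∀ N : ℕ, ∀ l : List ℕ, valL m l + csum m l.length = N →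
      l.Pairwise (· ≥ ·) → (∀ a ∈ l, a ≤ m) → ∃ n, lgen m n = l := by
    intro N
    induction N using Nat.strong_induction_on with
    | _ N ih =>
      intro l hN hs hle
      rcases eq_or_ne l [] with rfl | hne
      · exact ⟨0, rfl⟩
      · obtain ⟨ps, ple, plen, pval⟩ := prev_props m l hs hle hne
        have hmeas : valL m (prev m l) + csum m (prev m l).length < N := by
          rcases lt_or_eq_of_le plen with hlt | heq
          · have h1 : valL m (prev m l) < (m + 1) ^ (prev m l).length := valL_lt m _ ple
            have h2 : (m + 1) ^ (prev m l).length + csum m (prev m l).length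
                = csum m ((prev m l).length + 1) := by
              simp only [csum, Finset.sum_range_succ]; ring
            have h3 : csum m ((prev m l).length + 1) ≤ csum m l.length := csum_mono m hlt
            omega
          · have := pval heq
            rw [heq]
            omega
        obtain ⟨n, hn⟩ := ih _ hmeas (prev m l) rfl ps ple
        exact ⟨n + 1, by rw [lgen, hn, next_prev m l hs hle hne]⟩
  exact fun l hs hle => H _ l rfl hs hle

lemma lgen_le (m n : ℕ) : ∀ a ∈ lgen m n, a ≤ m := by
  induction n with
  | zero => simp [lgen]
  | succ n ih => exact next_le m _ ih

lemma lgen_length_mono (m : ℕ) {a b : ℕ} (h : a ≤ b) :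
    (lgen m a).length ≤ (lgen m b).length := by
  induction b with
  | zero => simp_all
  | succ b ih =>
    rcases Nat.lt_or_ge a (b+1) with h' | h'
    · exact le_trans (ih (by omega)) (length_le_next m _)
    · have : a = b + 1 := by omega
      subst this; rfl

lemma sum_ge (c : ℕ) : ∀ l : List ℕ, (∀ a ∈ l, c ≤ a) → l.length * c ≤ l.sum := by
  intro l
  induction l with
  | nil => simp
  | cons a t ih =>
    intro h
    have h1 := ih (fun b hb => h b (List.mem_cons_of_mem _ hb))
    have h2 := h a (by simp)
    simp only [List.length_cons, List.sum_cons]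
    calc (t.length + 1) * c = c + t.length * c := by ring
    _ ≤ a + t.sum := by omega

lemma rep_lemma (g : List ℕ) (x : ℕ) (hx : x ∈ AddSubmonoid.closure {y : ℕ | y ∈ g}) :
    ∃ l : List ℕ, (∀ i ∈ l, i < g.length) ∧ (l.map (fun i => g.getD i 0)).sum = x := by
  induction hx using AddSubmonoid.closure_induction with
  | mem y hy =>
    obtain ⟨i, hi, hgi⟩ := List.mem_iff_getElem.1 hy
    exact ⟨[i], by simpa using hi, by simp [List.getD_eq_getElem, hi, hgi]⟩
  | zero => exact ⟨[], by simp, by simp⟩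
  | add a b _ _ iha ihb =>
    obtain ⟨la, hla, hsa⟩ := iha
    obtain ⟨lb, hlb, hsb⟩ := ihb
    refine ⟨la ++ lb, ?_, by rw [List.map_append, List.sum_append, hsa, hsb]⟩
    intro i hi
    rcases List.mem_append.1 hi with h | h
    · exact hla i h
    · exact hlb i h

theorem stmt_18 (g : List ℕ) (hne : g ≠ []) (hpos : ∀ x ∈ g, 0 < x)
    (m : ℕ) (hm : m ∈ g) (hmin : ∀ x ∈ g, m ≤ x)
    (k x : ℕ) (hx : x ∈ AddSubmonoid.closure {y : ℕ | y ∈ g})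
    (hlt : x < (lgen (g.length - 1) k).length * m) :
    ∃ n < k, mgen g n = x := by
  have hg1 : 1 ≤ g.length := List.length_pos_iff.2 hne
  obtain ⟨l, hl, hsum⟩ := rep_lemma g x hx
  -- sort it
  set l' := List.insertionSort (· ≥ ·) l with hl'
  have hperm : l'.Perm l := List.perm_insertionSort (· ≥ ·) l
  have hsort : l'.Pairwise (· ≥ ·) := List.pairwise_insertionSort (· ≥ ·) l
  have hl'mem : ∀ i ∈ l', i < g.length := fun i hi => hl i (hperm.mem_iff.1 hi)
  have hsum' : (l'.map (fun i => g.getD i 0)).sum = x := by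
    rw [(hperm.map _).sum_eq, hsum]
  obtain ⟨n, hn⟩ := reach (g.length - 1) l' hsort (fun a ha => by have := hl'mem a ha; omega)
  refine ⟨n, ?_, by rw [mgen, hn, hsum']⟩
  by_contra hk
  push_neg at hk
  have key : (lgen (g.length - 1) k).length * m ≤ x := by
    calc (lgen (g.length - 1) k).length * m
        ≤ (lgen (g.length - 1) n).length * m :=
          Nat.mul_le_mul_right _ (lgen_length_mono _ hk)
    _ = (l'.map (fun i => g.getD i 0)).length * m := by rw [hn]; simp
    _ ≤ (l'.map (fun i => g.getD i 0)).sum := by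
          apply sum_ge
          intro a ha
          obtain ⟨i, hi, rfl⟩ := List.mem_map.1 ha
          have hig := hl'mem i hi
          rw [List.getD_eq_getElem _ _ hig]
          exact hmin _ (List.getElem_mem _)
    _ = x := hsum'
  omega
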